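/- For bounded linear operators A on H and B on K, w(A ⊗ B) ≥ (1/2)‖A‖‖B‖ + (1/4)| ‖A ⊗ B + A* ⊗ B*‖ − ‖A ⊗ B − A* ⊗ B*‖ |. -/

import Mathlib

open ContinuousLinearMap

/-- Numerical radius: `w(T) = sup { |⟨Tx,x⟩| : ‖x‖ = 1 }`. -/
noncomputable def nrad {E : Type*} [NormedAddCommGroup E] [InnerProductSpace ℂ E]
    (T : E →L[ℂ] E) : ℝ :=
  ⨆ x : {x : E // ‖x‖ = 1}, ‖(inner ℂ (T x.1) x.1 : ℂ)‖

/-- `tmul` realizes `E` as the Hilbert tensor product of `H` and `K`: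
the inner ℂ product is multiplicative on elementary tensors and elementary
tensors span a dense subspace. -/
structure IsHilbertTensorMap
    {H K E : Type*} [NormedAddCommGroup H] [InnerProductSpace ℂ H]
    [NormedAddCommGroup K] [InnerProductSpace ℂ K]
    [NormedAddCommGroup E] [InnerProductSpace ℂ E]
    (tmul : H →ₗ[ℂ] K →ₗ[ℂ] E) : Prop where
  inner_tmul : ∀ (x z : H) (y w : K),
    (inner ℂ (tmul x y) (tmul z w) : ℂ) = (inner ℂ x z : ℂ) * (inner ℂ y w : ℂ)
  dense_span :
    Dense ((Submodule.span ℂ (Set.range fun p : H × K => tmul p.1 p.2) : Submodule ℂ E) : Set E)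

/-- `T` is the tensor product operator `A ⊗ B`, i.e. `T (x ⊗ y) = A x ⊗ B y`. -/
def IsTensorOp {H K E : Type*} [NormedAddCommGroup H] [InnerProductSpace ℂ H]
    [NormedAddCommGroup K] [InnerProductSpace ℂ K]
    [NormedAddCommGroup E] [InnerProductSpace ℂ E]
    (tmul : H →ₗ[ℂ] K →ₗ[ℂ] E)
    (A : H →L[ℂ] H) (B : K →L[ℂ] K) (T : E →L[ℂ] E) : Prop :=
  ∀ (x : H) (y : K), T (tmul x y) = tmul (A x) (B y)

/-- For a self-adjoint operator, a bound on the quadratic form gives a bound on the norm. -/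
lemma sa_norm_le' {E : Type*} [NormedAddCommGroup E] [InnerProductSpace ℂ E] [CompleteSpace E]
    {S : E →L[ℂ] E} (hS : IsSelfAdjoint S) {c : ℝ} (hc : 0 ≤ c)
    (h : ∀ z : E, ‖(inner ℂ (S z) z : ℂ)‖ ≤ c * ‖z‖ ^ 2) : ‖S‖ ≤ c := by
  apply opNorm_le_bound _ hc
  intro x
  rcases eq_or_ne (S x) 0 with h0 | h0
  · simp [h0, mul_nonneg hc (norm_nonneg x)]
  have hx : x ≠ 0 := fun h' => h0 (by simp [h'])
  have hx0 : (0:ℝ) < ‖x‖ := norm_pos_iff.mpr hx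
  have hsx : (0:ℝ) < ‖S x‖ := norm_pos_iff.mpr h0
  have hsym : LinearMap.IsSymmetric (S : E →ₗ[ℂ] E) :=
    (isSelfAdjoint_iff_isSymmetric).mp hS
  set y : E := ((‖x‖ / ‖S x‖ : ℝ) : ℂ) • S x with hy
  have hny : ‖y‖ = ‖x‖ := by
    rw [hy, norm_smul, Complex.norm_real, Real.norm_eq_abs, abs_div,
      abs_of_nonneg (norm_nonneg x), abs_of_nonneg hsx.le]
    field_simp
  have key : (inner ℂ (S (x + y)) (x + y) : ℂ) - inner ℂ (S (x - y)) (x - y)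
      = 2 * ((inner ℂ (S x) y : ℂ) + inner ℂ (S y) x) := by
    simp only [map_add, map_sub, inner_add_left, inner_add_right, inner_sub_left,
      inner_sub_right]
    ring
  have hconj : (inner ℂ (S y) x : ℂ) = starRingEnd ℂ (inner ℂ (S x) y : ℂ) := by
    rw [hsym.apply_clm y x, ← inner_conj_symm]
  have hre : (inner ℂ (S x) y : ℂ) + inner ℂ (S y) x = 2 * ((inner ℂ (S x) y : ℂ).re : ℂ) := by
    rw [hconj, Complex.add_conj]
    push_cast
    ring
  have hrev : (inner ℂ (S x) y : ℂ).re = ‖x‖ * ‖S x‖ := by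
    rw [hy, inner_smul_right, inner_self_eq_norm_sq_to_K]
    simp
    field_simp
    simp [← Complex.ofReal_pow, RCLike.ofReal_alg]
  have h1 := h (x + y)
  have h2 := h (x - y)
  have hpar : ‖x + y‖ ^ 2 + ‖x - y‖ ^ 2 = 2 * (‖x‖ ^ 2 + ‖y‖ ^ 2) := by
    have := parallelogram_law_with_norm ℂ x y
    nlinarith [this]
  have hb : (4 : ℝ) * ((inner ℂ (S x) y : ℂ).re) ≤ c * ‖x + y‖ ^ 2 + c * ‖x - y‖ ^ 2 := by
    have heq : ((4 : ℝ) * ((inner ℂ (S x) y : ℂ).re)) =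
        ((inner ℂ (S (x + y)) (x + y) : ℂ) - inner ℂ (S (x - y)) (x - y)).re := by
      rw [key, hre]
      simp
      ring
    rw [heq]
    calc ((inner ℂ (S (x + y)) (x + y) : ℂ) - inner ℂ (S (x - y)) (x - y)).re
        ≤ ‖(inner ℂ (S (x + y)) (x + y) : ℂ) - inner ℂ (S (x - y)) (x - y)‖ := Complex.re_le_norm _
      _ ≤ ‖(inner ℂ (S (x + y)) (x + y) : ℂ)‖ + ‖(inner ℂ (S (x - y)) (x - y) : ℂ)‖ := norm_sub_le _ _
      _ ≤ c * ‖x + y‖ ^ 2 + c * ‖x - y‖ ^ 2 := add_le_add h1 h2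
  rw [hrev] at hb
  have hfin : 4 * (‖x‖ * ‖S x‖) ≤ 4 * (c * ‖x‖ ^ 2) := by
    calc 4 * (‖x‖ * ‖S x‖) ≤ c * ‖x + y‖ ^ 2 + c * ‖x - y‖ ^ 2 := hb
      _ = c * (‖x + y‖ ^ 2 + ‖x - y‖ ^ 2) := by ring
      _ = c * (2 * (‖x‖ ^ 2 + ‖y‖ ^ 2)) := by rw [hpar]
      _ = 4 * (c * ‖x‖ ^ 2) := by rw [hny]; ring
  nlinarith

lemma norm_tmul' {H K E : Type*} [NormedAddCommGroup H] [InnerProductSpace ℂ H]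
    [NormedAddCommGroup K] [InnerProductSpace ℂ K]
    [NormedAddCommGroup E] [InnerProductSpace ℂ E]
    {tmul : H →ₗ[ℂ] K →ₗ[ℂ] E} (htmul : IsHilbertTensorMap tmul) (x : H) (y : K) :
    ‖tmul x y‖ = ‖x‖ * ‖y‖ := by
  have h := htmul.inner_tmul x x y y
  rw [inner_self_eq_norm_sq_to_K, inner_self_eq_norm_sq_to_K, inner_self_eq_norm_sq_to_K] at h
  have h3 : ‖tmul x y‖ ^ 2 = ‖x‖ ^ 2 * ‖y‖ ^ 2 := by exact_mod_cast h
  rw [← Real.sqrt_sq (norm_nonneg ((tmul x) y)),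
    ← Real.sqrt_sq (mul_nonneg (norm_nonneg x) (norm_nonneg y)), h3,
    show ‖x‖ ^ 2 * ‖y‖ ^ 2 = (‖x‖ * ‖y‖) ^ 2 by ring]

set_option maxHeartbeats 1000000 in
theorem stmt6
    {H K E : Type*} [NormedAddCommGroup H] [InnerProductSpace ℂ H] [CompleteSpace H]
    [NormedAddCommGroup K] [InnerProductSpace ℂ K] [CompleteSpace K]
    [NormedAddCommGroup E] [InnerProductSpace ℂ E] [CompleteSpace E]
    (tmul : H →ₗ[ℂ] K →ₗ[ℂ] E) (htmul : IsHilbertTensorMap tmul)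
    (A : H →L[ℂ] H) (B : K →L[ℂ] K) (T : E →L[ℂ] E)
    (hT : IsTensorOp tmul A B T) :
    (1 / 2) * (‖A‖ * ‖B‖) +
      (1 / 4) * |‖T + ContinuousLinearMap.adjoint T‖ - ‖T - ContinuousLinearMap.adjoint T‖|
      ≤ nrad T := by
  -- ‖A x‖ * ‖B y‖ ≤ ‖T‖ * (‖x‖ * ‖y‖)
  have hAxBy : ∀ (x : H) (y : K), ‖A x‖ * ‖B y‖ ≤ ‖T‖ * (‖x‖ * ‖y‖) := by
    intro x y
    rw [← norm_tmul' htmul (A x) (B y), ← hT x y]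
    calc ‖T (tmul x y)‖ ≤ ‖T‖ * ‖(tmul x) y‖ := T.le_opNorm _
      _ = ‖T‖ * (‖x‖ * ‖y‖) := by rw [norm_tmul' htmul]
  -- ‖A‖ * ‖B‖ ≤ ‖T‖
  have hstep1 : ∀ x : H, ‖A x‖ * ‖B‖ ≤ ‖T‖ * ‖x‖ := by
    intro x
    have h1 : ‖(‖A x‖ : ℝ) • B‖ ≤ ‖T‖ * ‖x‖ := by
      apply opNorm_le_bound _ (by positivity)
      intro y
      rw [smul_apply, norm_smul, Real.norm_eq_abs, abs_of_nonneg (norm_nonneg _)]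
      calc ‖A x‖ * ‖B y‖ ≤ ‖T‖ * (‖x‖ * ‖y‖) := hAxBy x y
        _ = ‖T‖ * ‖x‖ * ‖y‖ := by ring
    calc ‖A x‖ * ‖B‖ = ‖(‖A x‖ : ℝ) • B‖ := by
          rw [norm_smul, Real.norm_eq_abs, abs_of_nonneg (norm_nonneg _)]
      _ ≤ ‖T‖ * ‖x‖ := h1
  have hAB : ‖A‖ * ‖B‖ ≤ ‖T‖ := by
    have h1 : ‖(‖B‖ : ℝ) • A‖ ≤ ‖T‖ := by
      apply opNorm_le_bound _ (norm_nonneg T)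
      intro x
      rw [smul_apply, norm_smul, Real.norm_eq_abs, abs_of_nonneg (norm_nonneg _)]
      calc ‖B‖ * ‖A x‖ = ‖A x‖ * ‖B‖ := by ring
        _ ≤ ‖T‖ * ‖x‖ := hstep1 x
    calc ‖A‖ * ‖B‖ = ‖(‖B‖ : ℝ) • A‖ := by
          rw [norm_smul, Real.norm_eq_abs, abs_of_nonneg (norm_nonneg _)]; ring
      _ ≤ ‖T‖ := h1
  -- numerical radius facts
  set w : ℝ := nrad T with hwdef
  have hbdd : BddAbove (Set.range fun x : {x : E // ‖x‖ = 1} => ‖(inner ℂ (T x.1) x.1 : ℂ)‖) := by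
    refine ⟨‖T‖, ?_⟩
    rintro _ ⟨x, rfl⟩
    calc ‖(inner ℂ (T x.1) x.1 : ℂ)‖ ≤ ‖T x.1‖ * ‖x.1‖ := norm_inner_le_norm _ _
      _ ≤ ‖T‖ * ‖x.1‖ * ‖x.1‖ := by
          have := T.le_opNorm x.1
          nlinarith [norm_nonneg x.1]
      _ = ‖T‖ := by rw [x.2]; ring
  have hw0 : 0 ≤ w := Real.iSup_nonneg fun x => norm_nonneg _
  have hquad : ∀ z : E, ‖(inner ℂ (T z) z : ℂ)‖ ≤ w * ‖z‖ ^ 2 := by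
    intro z
    rcases eq_or_ne z 0 with rfl | hz
    · simp
    have hz0 : (0:ℝ) < ‖z‖ := norm_pos_iff.mpr hz
    set u : E := ((‖z‖⁻¹ : ℝ) : ℂ) • z with hu
    have hun : ‖u‖ = 1 := by
      rw [hu, norm_smul, Complex.norm_real, Real.norm_eq_abs, abs_of_nonneg (by positivity)]
      field_simp
    have hiu : ‖(inner ℂ (T u) u : ℂ)‖ = ‖z‖⁻¹ ^ 2 * ‖(inner ℂ (T z) z : ℂ)‖ := by
      rw [hu, map_smul, inner_smul_left, inner_smul_right]
      simp only [norm_mul, RCLike.norm_conj, Complex.norm_real, Real.norm_eq_abs,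
        abs_of_nonneg (by positivity : (0:ℝ) ≤ ‖z‖⁻¹)]
      ring
    have hle : ‖(inner ℂ (T u) u : ℂ)‖ ≤ w :=
      le_ciSup hbdd (⟨u, hun⟩ : {x : E // ‖x‖ = 1})
    rw [hiu] at hle
    have : ‖(inner ℂ (T z) z : ℂ)‖ = ‖z‖ ^ 2 * (‖z‖⁻¹ ^ 2 * ‖(inner ℂ (T z) z : ℂ)‖) := by
      field_simp
    rw [this]
    calc ‖z‖ ^ 2 * (‖z‖⁻¹ ^ 2 * ‖(inner ℂ (T z) z : ℂ)‖) ≤ ‖z‖ ^ 2 * w := by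
          apply mul_le_mul_of_nonneg_left hle (by positivity)
      _ = w * ‖z‖ ^ 2 := by ring
  -- ‖T + T*‖ ≤ 2 w
  have hconjTz : ∀ z : E, (inner ℂ (ContinuousLinearMap.adjoint T z) z : ℂ)
      = starRingEnd ℂ (inner ℂ (T z) z : ℂ) := by
    intro z
    rw [ContinuousLinearMap.adjoint_inner_left, ← inner_conj_symm]
  have ha : ‖T + ContinuousLinearMap.adjoint T‖ ≤ 2 * w := by
    apply sa_norm_le' ?_ (by positivity)
    · intro z
      rw [add_apply, inner_add_left, hconjTz z]
      calc ‖(inner ℂ (T z) z : ℂ) + starRingEnd ℂ (inner ℂ (T z) z : ℂ)‖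
          ≤ ‖(inner ℂ (T z) z : ℂ)‖ + ‖starRingEnd ℂ (inner ℂ (T z) z : ℂ)‖ := norm_add_le _ _
        _ = 2 * ‖(inner ℂ (T z) z : ℂ)‖ := by rw [RCLike.norm_conj]; ring
        _ ≤ 2 * (w * ‖z‖ ^ 2) := by linarith [hquad z]
        _ = 2 * w * ‖z‖ ^ 2 := by ring
    · rw [IsSelfAdjoint, star_add, star_eq_adjoint, star_eq_adjoint, adjoint_adjoint, add_comm]
  -- ‖T - T*‖ ≤ 2 w
  have hb : ‖T - ContinuousLinearMap.adjoint T‖ ≤ 2 * w := by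
    have hnorm : ‖Complex.I • (T - ContinuousLinearMap.adjoint T)‖
        = ‖T - ContinuousLinearMap.adjoint T‖ := by
      rw [norm_smul, Complex.norm_I, one_mul]
    rw [← hnorm]
    apply sa_norm_le' ?_ (by positivity)
    · intro z
      rw [smul_apply, inner_smul_left, norm_mul, RCLike.norm_conj, Complex.norm_I, one_mul,
        sub_apply, inner_sub_left, hconjTz z]
      calc ‖(inner ℂ (T z) z : ℂ) - starRingEnd ℂ (inner ℂ (T z) z : ℂ)‖
          ≤ ‖(inner ℂ (T z) z : ℂ)‖ + ‖starRingEnd ℂ (inner ℂ (T z) z : ℂ)‖ := norm_sub_le _ _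
        _ = 2 * ‖(inner ℂ (T z) z : ℂ)‖ := by rw [RCLike.norm_conj]; ring
        _ ≤ 2 * (w * ‖z‖ ^ 2) := by linarith [hquad z]
        _ = 2 * w * ‖z‖ ^ 2 := by ring
    · rw [IsSelfAdjoint, star_smul, star_sub, star_eq_adjoint, star_eq_adjoint,
        adjoint_adjoint, Complex.star_def, Complex.conj_I, neg_smul, ← smul_neg, neg_sub]
  -- 2 ‖T‖ ≤ ‖T + T*‖ + ‖T - T*‖
  have htsum : 2 * ‖T‖ ≤ ‖T + ContinuousLinearMap.adjoint T‖
      + ‖T - ContinuousLinearMap.adjoint T‖ := by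
    have heq : (T + ContinuousLinearMap.adjoint T) + (T - ContinuousLinearMap.adjoint T)
        = (2 : ℂ) • T := by
      rw [two_smul]
      abel
    calc 2 * ‖T‖ = ‖(2 : ℂ) • T‖ := by
          rw [norm_smul]
          norm_num
      _ = ‖(T + ContinuousLinearMap.adjoint T) + (T - ContinuousLinearMap.adjoint T)‖ := by
          rw [heq]
      _ ≤ _ := norm_add_le _ _
  -- conclude
  rcases abs_cases (‖T + ContinuousLinearMap.adjoint T‖ - ‖T - ContinuousLinearMap.adjoint T‖)
    with ⟨habs, _⟩ | ⟨habs, _⟩ <;> rw [habs] <;> linarith
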